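/- Let C be a 3-MIPPC(n,M,q) over Q. Then for any distinct a₁, a₂ ∈ Q, |A¹_{a₁} ∩ A¹_{a₂}| ≤ 1, where A¹_a = {b ∈ Q^{n−1} : (a,b) ∈ C} (b being the vector of the last n−1 coordinates). -/
import Mathlib


/-- Codewords of length `m+1` over `Fin q`, written as a first coordinate together with the
vector of the remaining `m` coordinates. Descendant code of a sub-code. -/
def descS {m q : ℕ} (C' : Finset (Fin q × (Fin m → Fin q))) :
    Set (Fin q × (Fin m → Fin q)) :=
  {x | (∃ c ∈ C', c.1 = x.1) ∧ ∀ i, ∃ c ∈ C', c.2 i = x.2 i}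

/-- The multimedia `t`-IPP property for such codes. -/
def isMIPPCS {m q : ℕ} (t : ℕ) (C : Finset (Fin q × (Fin m → Fin q))) : Prop :=
  ∀ S : Set (Fin q × (Fin m → Fin q)),
    (∃ C' : Finset (Fin q × (Fin m → Fin q)),
        C' ⊆ C ∧ C'.Nonempty ∧ C'.card ≤ t ∧ descS C' = S) →
    ∃ c, ∀ C' : Finset (Fin q × (Fin m → Fin q)),
      C' ⊆ C → C'.Nonempty → C'.card ≤ t → descS C' = S → c ∈ C'

/-- `A¹_a`: the set of vectors of last coordinates of codewords whose first coordinate is `a`. -/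
def A1S {m q : ℕ} (C : Finset (Fin q × (Fin m → Fin q))) (a : Fin q) :
    Finset (Fin m → Fin q) :=
  (C.filter (fun c => c.1 = a)).image Prod.snd

/-- In a 3-MIPPC, any two distinct `A¹`-sets meet in at most one vector. -/
theorem condI_of_mippc3 {m q : ℕ} (C : Finset (Fin q × (Fin m → Fin q)))
    (hC : isMIPPCS 3 C) :
    ∀ a₁ a₂ : Fin q, a₁ ≠ a₂ → (A1S C a₁ ∩ A1S C a₂).card ≤ 1 := by
  intro a₁ a₂ hne
  rw [Finset.card_le_one]
  intro b hb b' hb'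
  simp only [Finset.mem_inter, A1S, Finset.mem_image, Finset.mem_filter] at hb hb'
  obtain ⟨⟨c1, ⟨hc1C, hc1a⟩, hc1b⟩, ⟨c2, ⟨hc2C, hc2a⟩, hc2b⟩⟩ := hb
  obtain ⟨⟨c3, ⟨hc3C, hc3a⟩, hc3b⟩, ⟨c4, ⟨hc4C, hc4a⟩, hc4b⟩⟩ := hb'
  -- c1 = (a₁, b), c2 = (a₂, b), c3 = (a₁, b'), c4 = (a₂, b')
  have e1 : c1 = (a₁, b) := Prod.ext hc1a hc1b
  have e2 : c2 = (a₂, b) := Prod.ext hc2a hc2b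
  have e3 : c3 = (a₁, b') := Prod.ext hc3a hc3b
  have e4 : c4 = (a₂, b') := Prod.ext hc4a hc4b
  subst e1 e2 e3 e4
  set C₁ : Finset (Fin q × (Fin m → Fin q)) := {(a₁, b), (a₂, b')} with hC₁
  set C₂ : Finset (Fin q × (Fin m → Fin q)) := {(a₂, b), (a₁, b')} with hC₂
  have hsub1 : C₁ ⊆ C := by
    intro x hx
    simp only [hC₁, Finset.mem_insert, Finset.mem_singleton] at hx
    rcases hx with rfl | rfl <;> assumption
  have hsub2 : C₂ ⊆ C := by
    intro x hx
    simp only [hC₂, Finset.mem_insert, Finset.mem_singleton] at hx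
    rcases hx with rfl | rfl <;> assumption
  have hdesc : descS C₁ = descS C₂ := by
    ext x
    simp only [descS, Set.mem_setOf_eq, hC₁, hC₂, Finset.mem_insert,
      Finset.mem_singleton]
    constructor <;>
    · rintro ⟨⟨c, hc, hce⟩, h2⟩
      refine ⟨?_, fun i => ?_⟩
      · rcases hc with rfl | rfl
        · exact ⟨_, Or.inr rfl, hce⟩
        · exact ⟨_, Or.inl rfl, hce⟩
      · obtain ⟨d, hd, hde⟩ := h2 i
        rcases hd with rfl | rfl
        · exact ⟨_, Or.inl rfl, hde⟩
        · exact ⟨_, Or.inr rfl, hde⟩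
  have hcard1 : C₁.card ≤ 3 := le_trans (Finset.card_insert_le _ _) (by simp)
  have hcard2 : C₂.card ≤ 3 := le_trans (Finset.card_insert_le _ _) (by simp)
  have hne1 : C₁.Nonempty := ⟨(a₁, b), by simp [hC₁]⟩
  have hne2 : C₂.Nonempty := ⟨(a₂, b), by simp [hC₂]⟩
  obtain ⟨c, hc⟩ := hC (descS C₁) ⟨C₁, hsub1, hne1, hcard1, rfl⟩
  have h1 := hc C₁ hsub1 hne1 hcard1 rfl
  have h2 := hc C₂ hsub2 hne2 hcard2 hdesc.symm
  simp only [hC₁, hC₂, Finset.mem_insert, Finset.mem_singleton] at h1 h2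
  rcases h1 with rfl | rfl <;> rcases h2 with h2 | h2 <;>
    first
    | exact absurd (congrArg Prod.fst h2) hne
    | exact absurd (congrArg Prod.fst h2) hne.symm
    | exact (congrArg Prod.snd h2)
    | exact (congrArg Prod.snd h2).symm
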